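/- Let (x_m)_{m≥0} be the k-averaging process on ℝ^n with n > k ≥ 2, started from a deterministic vector x_0 with ∑_{i=1}^n x_{0,i} = 0, let S_n(l) = ∑_{i=1}^n x_{l,i}², let F_l be the σ-algebra generated by the process up to time l, and let τ = 1 − (k−1)/(n−1). Then M_l := S_n(l)/τ^l is a nonnegative martingale with respect to the filtration (F_l)_{l≥0}, and consequently the limit lim_{l→∞} S_n(l)/τ^l exists and is finite almost surely. -/

import Mathlib

open MeasureTheory ProbabilityTheory Filter

noncomputable section

instance (α : Type*) : MeasurableSpace (Finset α) := ⊤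

/-- One averaging step: replace all coordinates in `A` by their average. -/
def avgStep {n : ℕ} (k : ℕ) (A : Finset (Fin n)) (x : Fin n → ℝ) : Fin n → ℝ :=
  fun i => if i ∈ A then (∑ j ∈ A, x j) / k else x i

/-- The `k`-averaging process driven by the sequence of chosen subsets `A · ω`. -/
def proc {Ω : Type*} {n : ℕ} (k : ℕ) (x0 : Fin n → ℝ) (A : ℕ → Ω → Finset (Fin n))
    (ω : Ω) : ℕ → Fin n → ℝ
  | 0 => x0
  | m + 1 => avgStep k (A m ω) (proc k x0 A ω m)

section Comb
open Finset


lemma card_filter_mem_powersetCard {α : Type*} [DecidableEq α] (u : Finset α) (a : α)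
    (ha : a ∈ u) (k : ℕ) (p : Finset α → Prop) [DecidablePred p]
    (hp : ∀ s, a ∉ s → (p (insert a s) ↔ p s)) :
    ((u.powersetCard (k+1)).filter (fun s => a ∈ s ∧ p s)).card
      = (((u.erase a).powersetCard k).filter p).card := by
  apply Finset.card_bij' (fun s _ => s.erase a) (fun t _ => insert a t)
  case hi =>
    intro s hs
    simp only [mem_filter, mem_powersetCard] at hs ⊢
    obtain ⟨⟨hsu, hcard⟩, has, hps⟩ := hs
    refine ⟨⟨erase_subset_erase a hsu, by rw [card_erase_of_mem has, hcard]; rfl⟩, ?_⟩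
    have h2 := hp (s.erase a) (notMem_erase a s)
    rw [insert_erase has] at h2
    exact h2.mp hps
  case hj =>
    intro t ht
    simp only [mem_filter, mem_powersetCard] at ht ⊢
    obtain ⟨⟨htu, hcard⟩, hpt⟩ := ht
    have hat : a ∉ t := fun h => (notMem_erase a u) (htu h)
    refine ⟨⟨insert_subset ha (htu.trans (erase_subset a u)), by
      rw [card_insert_of_notMem hat, hcard]⟩, mem_insert_self a t, (hp t hat).mpr hpt⟩
  case left_inv =>
    intro s hs
    simp only [mem_filter] at hs
    exact insert_erase hs.2.1
  case right_inv =>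
    intro t ht
    simp only [mem_filter, mem_powersetCard] at ht
    exact erase_insert (fun h => (notMem_erase a u) (ht.1.1 h))


lemma sum_extend {α : Type*} [DecidableEq α] {s u : Finset α} (h : s ⊆ u) (f : α → ℝ) :
    ∑ i ∈ s, f i = ∑ i ∈ u, if i ∈ s then f i else 0 := by
  rw [Finset.sum_ite_mem, Finset.inter_eq_right.mpr h]

lemma sum_if_card {α : Type*} (P : Finset (Finset α)) (p : Finset α → Prop) [DecidablePred p]
    (c : ℝ) : ∑ s ∈ P, (if p s then c else 0) = ((P.filter p).card : ℝ) * c := by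
  rw [← Finset.sum_filter, Finset.sum_const, nsmul_eq_mul]

-- single swap
lemma swap_single {α : Type*} [DecidableEq α] (P : Finset (Finset α)) (u : Finset α)
    (hP : ∀ s ∈ P, s ⊆ u) (g : α → ℝ) :
    ∑ s ∈ P, ∑ i ∈ s, g i
      = ∑ i ∈ u, ((P.filter (fun s => i ∈ s)).card : ℝ) * g i := by
  calc ∑ s ∈ P, ∑ i ∈ s, g i = ∑ s ∈ P, ∑ i ∈ u, if i ∈ s then g i else 0 :=
        Finset.sum_congr rfl fun s hs => sum_extend (hP s hs) g
    _ = ∑ i ∈ u, ∑ s ∈ P, if i ∈ s then g i else 0 := Finset.sum_comm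
    _ = _ := Finset.sum_congr rfl fun i _ => sum_if_card P _ _

-- double swap
lemma swap_pair {α : Type*} [DecidableEq α] (P : Finset (Finset α)) (u : Finset α)
    (hP : ∀ s ∈ P, s ⊆ u) (g : α → α → ℝ) :
    ∑ s ∈ P, ∑ i ∈ s, ∑ j ∈ s.erase i, g i j
      = ∑ i ∈ u, ∑ j ∈ u.erase i,
          ((P.filter (fun s => i ∈ s ∧ j ∈ s)).card : ℝ) * g i j := by
  have key : ∀ s ∈ P, ∑ i ∈ s, ∑ j ∈ s.erase i, g i j
      = ∑ i ∈ u, ∑ j ∈ u.erase i, if i ∈ s ∧ j ∈ s then g i j else 0 := by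
    intro s hs
    rw [sum_extend (hP s hs)]
    refine Finset.sum_congr rfl fun i _ => ?_
    by_cases hi : i ∈ s
    · simp only [hi, if_true, true_and]
      rw [sum_extend (erase_subset_erase i (hP s hs))]
      refine Finset.sum_congr rfl fun j hj => ?_
      have hji : j ≠ i := (Finset.mem_erase.mp hj).1
      by_cases hjs : j ∈ s <;> simp [Finset.mem_erase, hji, hjs]
    · simp only [hi, if_false, false_and]
      simp
  calc ∑ s ∈ P, ∑ i ∈ s, ∑ j ∈ s.erase i, g i j
      = ∑ s ∈ P, ∑ i ∈ u, ∑ j ∈ u.erase i, if i ∈ s ∧ j ∈ s then g i j else 0 :=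
        Finset.sum_congr rfl key
    _ = ∑ i ∈ u, ∑ s ∈ P, ∑ j ∈ u.erase i, if i ∈ s ∧ j ∈ s then g i j else 0 :=
        Finset.sum_comm
    _ = ∑ i ∈ u, ∑ j ∈ u.erase i, ∑ s ∈ P, if i ∈ s ∧ j ∈ s then g i j else 0 :=
        Finset.sum_congr rfl fun i _ => Finset.sum_comm
    _ = _ := Finset.sum_congr rfl fun i _ => Finset.sum_congr rfl fun j _ => sum_if_card P _ _
-- counting values on Fin n
lemma count_single {n k : ℕ} (hk : 1 ≤ k) (i : Fin n) :
    (((Finset.univ : Finset (Fin n)).powersetCard k).filter (fun s => i ∈ s)).card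
      = (n-1).choose (k-1) := by
  obtain ⟨k, rfl⟩ : ∃ m, k = m + 1 := ⟨k - 1, (Nat.succ_pred_eq_of_pos hk).symm⟩
  have h := card_filter_mem_powersetCard (Finset.univ : Finset (Fin n)) i (mem_univ i) k
      (fun _ => True) (fun _ _ => Iff.rfl)
  simp only [filter_true_of_mem (fun _ _ => trivial), and_true] at h
  rw [h, card_powersetCard, card_erase_of_mem (mem_univ i), card_univ, Fintype.card_fin]
  simp

lemma count_pair {n k : ℕ} (hk : 2 ≤ k) {i j : Fin n} (hij : j ≠ i) :
    (((Finset.univ : Finset (Fin n)).powersetCard k).filter (fun s => i ∈ s ∧ j ∈ s)).card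
      = (n-2).choose (k-2) := by
  obtain ⟨k, rfl⟩ : ∃ m, k = m + 1 + 1 := ⟨k - 2, by omega⟩
  have h := card_filter_mem_powersetCard (Finset.univ : Finset (Fin n)) i (mem_univ i) (k+1)
      (fun s => j ∈ s) (fun s hs => by simp [Finset.mem_insert, hij])
  rw [h]
  have h2 := card_filter_mem_powersetCard ((Finset.univ : Finset (Fin n)).erase i) j
      (by simp [Finset.mem_erase, hij]) k (fun _ => True) (fun _ _ => Iff.rfl)
  simp only [filter_true_of_mem (fun _ _ => trivial), and_true] at h2
  rw [h2, card_powersetCard, card_erase_of_mem (by simp [Finset.mem_erase, hij]),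
    card_erase_of_mem (mem_univ i), card_univ, Fintype.card_fin]
  congr 1 <;> omega

lemma choose_id1 {n k : ℕ} (hk : 1 ≤ k) (hn : k ≤ n) :
    n * (n-1).choose (k-1) = n.choose k * k := by
  obtain ⟨n, rfl⟩ : ∃ m, n = m + 1 := ⟨n - 1, by omega⟩
  obtain ⟨k, rfl⟩ : ∃ m, k = m + 1 := ⟨k - 1, by omega⟩
  simpa using Nat.add_one_mul_choose_eq n k

lemma avg_key {n k : ℕ} (hk : 2 ≤ k) (hn : k < n) (x : Fin n → ℝ) (hx : ∑ i, x i = 0) :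
    ∑ s ∈ Finset.powersetCard k (Finset.univ : Finset (Fin n)), ∑ i, (avgStep k s x i)^2
      = (n.choose k : ℝ) * (1 - ((k:ℝ)-1)/((n:ℝ)-1)) * ∑ i, (x i)^2 := by
  have hk0 : (k:ℝ) ≠ 0 := by positivity
  have hn1 : ((n:ℝ)-1) ≠ 0 := by
    have : (1:ℝ) < (n:ℝ) := by exact_mod_cast lt_of_le_of_lt (by omega : 1 ≤ k) hn
    linarith
  set S : ℝ := ∑ i, (x i)^2 with hS
  set C : ℝ := (n.choose k : ℝ)
  set C1 : ℝ := ((n-1).choose (k-1) : ℝ)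
  set C2 : ℝ := ((n-2).choose (k-2) : ℝ)
  -- step A
  have stepA : ∀ s ∈ Finset.powersetCard k (Finset.univ : Finset (Fin n)),
      ∑ i, (avgStep k s x i)^2 = S - (∑ i ∈ s, (x i)^2) + (∑ i ∈ s, x i)^2 / k := by
    intro s hs
    have hcard : s.card = k := (Finset.mem_powersetCard.mp hs).2
    rw [← Finset.sum_add_sum_compl s (fun i => (avgStep k s x i)^2)]
    have e1 : ∑ i ∈ s, (avgStep k s x i)^2 = (∑ i ∈ s, x i)^2 / k := by
      have hc : ∀ i ∈ s, (avgStep k s x i)^2 = ((∑ j ∈ s, x j) / k)^2 := by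
        intro i hi; simp [avgStep, hi]
      rw [Finset.sum_congr rfl hc, Finset.sum_const, hcard, nsmul_eq_mul, div_pow]
      field_simp
    have e2 : ∑ i ∈ sᶜ, (avgStep k s x i)^2 = ∑ i ∈ sᶜ, (x i)^2 := by
      refine Finset.sum_congr rfl fun i hi => ?_
      have : i ∉ s := Finset.mem_compl.mp hi
      simp [avgStep, this]
    rw [e1, e2]
    have e3 : ∑ i ∈ sᶜ, (x i)^2 = S - ∑ i ∈ s, (x i)^2 := by
      have := Finset.sum_add_sum_compl s (fun i => (x i)^2)
      rw [hS]; linarith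
    rw [e3]; ring
  rw [Finset.sum_congr rfl stepA]
  have hsub : ∀ s ∈ Finset.powersetCard k (Finset.univ : Finset (Fin n)),
      s ⊆ (Finset.univ : Finset (Fin n)) := fun s hs => (Finset.mem_powersetCard.mp hs).1
  have hcardP : ((Finset.powersetCard k (Finset.univ : Finset (Fin n))).card : ℝ) = C := by
    rw [Finset.card_powersetCard, Finset.card_univ, Fintype.card_fin]
  -- the three sums
  have sum1 : ∑ s ∈ Finset.powersetCard k (Finset.univ : Finset (Fin n)),
      (∑ i ∈ s, (x i)^2) = C1 * S := by
    rw [swap_single _ Finset.univ hsub]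
    rw [Finset.sum_congr rfl (fun i _ => by rw [count_single (by omega : 1 ≤ k) i])]
    rw [← Finset.mul_sum]
  have sumlin : ∑ s ∈ Finset.powersetCard k (Finset.univ : Finset (Fin n)),
      (∑ i ∈ s, x i)^2 = C1 * S - C2 * S := by
    have expand : ∀ s : Finset (Fin n), (∑ i ∈ s, x i)^2
        = ∑ i ∈ s, (x i)^2 + ∑ i ∈ s, ∑ j ∈ s.erase i, x i * x j := by
      intro s
      rw [sq, Finset.sum_mul_sum, ← Finset.sum_add_distrib]
      refine Finset.sum_congr rfl fun i hi => ?_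
      rw [← Finset.add_sum_erase s (fun j => x i * x j) hi, sq]
    rw [Finset.sum_congr rfl (fun s _ => expand s), Finset.sum_add_distrib, sum1]
    have cross : ∑ s ∈ Finset.powersetCard k (Finset.univ : Finset (Fin n)),
        ∑ i ∈ s, ∑ j ∈ s.erase i, x i * x j = - (C2 * S) := by
      rw [swap_pair _ Finset.univ hsub]
      have inner : ∀ i : Fin n, ∑ j ∈ Finset.univ.erase i,
          ((((Finset.univ : Finset (Fin n)).powersetCard k).filter
            (fun s => i ∈ s ∧ j ∈ s)).card : ℝ) * (x i * x j)
          = C2 * (x i * (- x i)) := by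
        intro i
        have hsum : ∑ j ∈ Finset.univ.erase i, x j = - x i := by
          rw [Finset.sum_erase_eq_sub (Finset.mem_univ i), hx]; ring
        rw [Finset.sum_congr rfl (fun j hj => by
          rw [count_pair hk (Finset.mem_erase.mp hj).1])]
        rw [← Finset.mul_sum, ← Finset.mul_sum, hsum]
      rw [Finset.sum_congr rfl (fun i _ => inner i), ← Finset.mul_sum]
      have : ∑ i, x i * (- x i) = - S := by
        rw [hS, ← Finset.sum_neg_distrib]
        exact Finset.sum_congr rfl fun i _ => by ring
      rw [this]; ring
    rw [cross]; ring
  rw [Finset.sum_add_distrib, Finset.sum_sub_distrib, Finset.sum_const, sum1,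
    ← Finset.sum_div, sumlin, nsmul_eq_mul, hcardP]
  -- arithmetic
  have h1 : (k:ℝ) * C = (n:ℝ) * C1 := by
    have := choose_id1 (by omega : 1 ≤ k) hn.le
    have := congrArg (fun m : ℕ => (m : ℝ)) this
    push_cast at this
    linarith
  have h2 : ((k:ℝ)-1) * C1 = ((n:ℝ)-1) * C2 := by
    have hnat : (n-1) * (n-1-1).choose (k-1-1) = (n-1).choose (k-1) * (k-1) :=
      choose_id1 (by omega : 1 ≤ k - 1) (by omega : k - 1 ≤ n - 1)
    have hc : n - 1 - 1 = n - 2 := by omega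
    have hc2 : k - 1 - 1 = k - 2 := by omega
    rw [hc, hc2] at hnat
    have := congrArg (fun m : ℕ => (m : ℝ)) hnat
    push_cast [Nat.cast_sub (by omega : 1 ≤ n), Nat.cast_sub (by omega : 1 ≤ k)] at this
    linarith
  have coeff : C - C1 + (C1 - C2)/k = C * (1 - ((k:ℝ)-1)/((n:ℝ)-1)) := by
    field_simp
    linear_combination ((k:ℝ)-1) * h1 + h2
  linear_combination S * coeff

end Comb

section Meas
variable {Ω : Type*} {n k : ℕ} (x0 : Fin n → ℝ) (A : ℕ → Ω → Finset (Fin n))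

lemma avgStep_measurable (s : Finset (Fin n)) : Measurable (fun x : Fin n → ℝ => avgStep k s x) := by
  apply measurable_pi_lambda
  intro i
  unfold avgStep
  by_cases h : i ∈ s
  · simp only [h, if_true]
    exact (Finset.measurable_sum s (fun j _ => measurable_pi_apply j)).div_const _
  · simp only [h, if_false]
    exact measurable_pi_apply i

lemma proc_measurable_iSup (m : ℕ) :
    Measurable[⨆ j ∈ Set.Iio m, MeasurableSpace.comap (A j) inferInstance]
      (fun ω => proc k x0 A ω m) := by
  induction m with
  | zero => exact @measurable_const _ _ _ _ _
  | succ m ih =>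
    have hle : (⨆ j ∈ Set.Iio m, MeasurableSpace.comap (A j) inferInstance)
        ≤ ⨆ j ∈ Set.Iio (m+1), MeasurableSpace.comap (A j) inferInstance := by
      refine iSup₂_le fun j hj => ?_
      exact le_iSup₂ (f := fun j _ => MeasurableSpace.comap (A j) inferInstance) j
        (Set.Iio_subset_Iio (Nat.le_succ m) hj)
    have hproc' : Measurable[⨆ j ∈ Set.Iio (m+1), MeasurableSpace.comap (A j) inferInstance]
        (fun ω => proc k x0 A ω m) := ih.mono hle le_rfl
    have hA : Measurable[⨆ j ∈ Set.Iio (m+1), MeasurableSpace.comap (A j) inferInstance]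
        (A m) := by
      have h1 : Measurable[MeasurableSpace.comap (A m) inferInstance] (A m) :=
        measurable_iff_comap_le.mpr le_rfl
      exact h1.mono (le_iSup₂ (f := fun j _ => MeasurableSpace.comap (A j) inferInstance) m
        (by simp)) le_rfl
    have hg : Measurable (fun p : (Fin n → ℝ) × Finset (Fin n) => avgStep k p.2 p.1) :=
      measurable_from_prod_countable_left (fun s => avgStep_measurable s)
    exact hg.comp (hproc'.prodMk hA)

end Meas

section Bound
variable {Ω : Type*} {n k : ℕ}

lemma avgStep_bound (hk : 1 ≤ k) (s : Finset (Fin n)) (x : Fin n → ℝ) (C : ℝ)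
    (hC0 : 0 ≤ C) (h : ∀ i, |x i| ≤ C) (i : Fin n) :
    |avgStep k s x i| ≤ (n:ℝ) * C + C := by
  unfold avgStep
  by_cases hi : i ∈ s
  · simp only [hi, if_true]
    have h1 : |(∑ j ∈ s, x j) / (k:ℝ)| ≤ |∑ j ∈ s, x j| := by
      rw [abs_div]
      apply div_le_self (abs_nonneg _) _ |>.trans_eq rfl
      · simp only [abs_of_nonneg (by positivity : (0:ℝ) ≤ (k:ℝ))]
        exact_mod_cast hk
    refine h1.trans ?_
    calc |∑ j ∈ s, x j| ≤ ∑ j ∈ s, |x j| := Finset.abs_sum_le_sum_abs _ _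
      _ ≤ ∑ _j ∈ s, C := Finset.sum_le_sum fun j _ => h j
      _ = s.card * C := by rw [Finset.sum_const, nsmul_eq_mul]
      _ ≤ (n : ℝ) * C := by
          apply mul_le_mul_of_nonneg_right _ hC0
          exact_mod_cast s.card_le_univ.trans_eq (by simp)
      _ ≤ (n:ℝ) * C + C := by linarith
  · simp only [hi, if_false]
    exact (h i).trans (by nlinarith)

lemma proc_bound (x0 : Fin n → ℝ) (A : ℕ → Ω → Finset (Fin n)) (hk : 1 ≤ k) (m : ℕ) :
    ∃ C : ℝ, 0 ≤ C ∧ ∀ ω i, |proc k x0 A ω m i| ≤ C := by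
  induction m with
  | zero =>
    refine ⟨∑ i, |x0 i|, Finset.sum_nonneg fun i _ => abs_nonneg _, fun ω i => ?_⟩
    exact Finset.single_le_sum (fun j _ => abs_nonneg (x0 j)) (Finset.mem_univ i)
  | succ m ih =>
    obtain ⟨C, hC0, hC⟩ := ih
    refine ⟨(n : ℝ) * C + C, by positivity, fun ω i => ?_⟩
    show |avgStep k (A m ω) (proc k x0 A ω m) i| ≤ _
    unfold avgStep
    by_cases h : i ∈ A m ω
    · simp only [h, if_true]
      have h1 : |(∑ j ∈ A m ω, proc k x0 A ω m j) / (k:ℝ)| ≤ |∑ j ∈ A m ω, proc k x0 A ω m j| := by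
        rw [abs_div]
        apply div_le_self (abs_nonneg _) _ |>.trans_eq rfl
        · simp only [abs_of_nonneg (by positivity : (0:ℝ) ≤ (k:ℝ))]
          exact_mod_cast hk
      refine h1.trans ?_
      calc |∑ j ∈ A m ω, proc k x0 A ω m j| ≤ ∑ j ∈ A m ω, |proc k x0 A ω m j| :=
            Finset.abs_sum_le_sum_abs _ _
        _ ≤ ∑ _j ∈ A m ω, C := Finset.sum_le_sum fun j _ => hC ω j
        _ = (A m ω).card * C := by rw [Finset.sum_const, nsmul_eq_mul]
        _ ≤ (n : ℝ) * C := by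
            apply mul_le_mul_of_nonneg_right _ hC0
            exact_mod_cast (A m ω).card_le_univ.trans_eq (by simp)
        _ ≤ (n:ℝ) * C + C := by linarith
    · simp only [h, if_false]
      exact (hC ω i).trans (by nlinarith)

lemma proc_sum_zero (x0 : Fin n → ℝ) (A : ℕ → Ω → Finset (Fin n)) (hk : 1 ≤ k)
    (hx0 : ∑ i, x0 i = 0) (ω : Ω) (hω : ∀ m, (A m ω).card = k) (m : ℕ) :
    ∑ i, proc k x0 A ω m i = 0 := by
  induction m with
  | zero => exact hx0
  | succ m ih =>
    show ∑ i, avgStep k (A m ω) (proc k x0 A ω m) i = 0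
    set s := A m ω with hs
    set x := proc k x0 A ω m with hxd
    rw [← Finset.sum_add_sum_compl s (fun i => avgStep k s x i)]
    have e1 : ∑ i ∈ s, avgStep k s x i = ∑ j ∈ s, x j := by
      have hc : ∀ i ∈ s, avgStep k s x i = (∑ j ∈ s, x j) / k := fun i hi => by
        simp [avgStep, hi]
      rw [Finset.sum_congr rfl hc, Finset.sum_const, hω m, nsmul_eq_mul]
      have hk0 : (k:ℝ) ≠ 0 := by positivity
      field_simp
    have e2 : ∑ i ∈ sᶜ, avgStep k s x i = ∑ i ∈ sᶜ, x i := by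
      refine Finset.sum_congr rfl fun i hi => ?_
      have : i ∉ s := Finset.mem_compl.mp hi
      simp [avgStep, this]
    rw [e1, e2, Finset.sum_add_sum_compl s x]
    exact ih

end Bound

/-- For the `k`-averaging process started from a mean-zero vector, with
`τ = 1 - (k-1)/(n-1)`, the process `M_l = S_n(l)/τ^l` is a nonnegative martingale with
respect to the natural filtration of the process, and hence `lim_l S_n(l)/τ^l` exists
and is finite almost surely. -/
theorem averaging_sq_sum_martingale
    (n k : ℕ) (hk : 2 ≤ k) (hn : k < n)
    (Ω : Type*) [mΩ : MeasurableSpace Ω]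
    (μ : Measure Ω) [IsProbabilityMeasure μ]
    (A : ℕ → Ω → Finset (Fin n))
    (hmeas : ∀ m, Measurable (A m))
    (hindep : iIndepFun (m := fun _ : ℕ => inferInstance) A μ)
    (hunif : ∀ (m : ℕ) (s : Finset (Fin n)),
      μ (A m ⁻¹' {s}) = if s.card = k then ((n.choose k : ENNReal))⁻¹ else 0)
    (x0 : Fin n → ℝ) (hx0 : ∑ i, x0 i = 0)
    (ℱ : Filtration ℕ mΩ)
    (hℱ : ∀ l, ℱ l
      = ⨆ m ∈ Set.Iic l, MeasurableSpace.comap (fun ω => proc k x0 A ω m) inferInstance)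
    (M : ℕ → Ω → ℝ)
    (hM : ∀ l ω, M l ω
      = (∑ i, (proc k x0 A ω l i) ^ 2) / (1 - ((k : ℝ) - 1) / ((n : ℝ) - 1)) ^ l) :
    Martingale M ℱ μ ∧ (∀ l ω, 0 ≤ M l ω) ∧
      ∀ᵐ ω ∂μ, ∃ c : ℝ, Tendsto (fun l => M l ω) atTop (nhds c) := by
  classical
  have hk1 : 1 ≤ k := by omega
  set τ : ℝ := 1 - ((k:ℝ)-1)/((n:ℝ)-1) with hτ
  have hnR : (1:ℝ) < (n:ℝ) := by
    have : 1 < n := by omega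
    exact_mod_cast this
  have hτpos : 0 < τ := by
    rw [hτ, sub_pos, div_lt_one (by linarith)]
    have : (k:ℝ) < n := by exact_mod_cast hn
    linarith
  have hXmeas : ∀ m, Measurable (fun ω => proc k x0 A ω m) := fun m =>
    (proc_measurable_iSup x0 A m).mono (iSup₂_le fun j _ => (hmeas j).comap_le) le_rfl
  have hMeq : ∀ l, M l = fun ω => (∑ i, (proc k x0 A ω l i)^2) / τ^l := fun l =>
    funext fun ω => hM l ω
  have hMmeas : ∀ l, Measurable (M l) := by
    intro l
    rw [hMeq]
    exact ((Finset.measurable_sum _ fun i _ =>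
      ((measurable_pi_apply i).comp (hXmeas l)).pow_const 2).div_const _)
  have hMnonneg : ∀ l ω, 0 ≤ M l ω := by
    intro l ω; rw [hM]
    exact div_nonneg (Finset.sum_nonneg fun i _ => sq_nonneg _) (pow_nonneg hτpos.le _)
  have hIntOf : ∀ f : Ω → ℝ, Measurable f → (∃ C, ∀ ω, |f ω| ≤ C) → Integrable f μ := by
    rintro f hf ⟨C, hC⟩
    exact (integrable_const C).mono' hf.aestronglyMeasurable
      (ae_of_all _ (by simpa [Real.norm_eq_abs] using hC))
  have hMbdd : ∀ l, ∃ C, ∀ ω, |M l ω| ≤ C := by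
    intro l
    obtain ⟨C, hC0, hC⟩ := proc_bound x0 A hk1 l
    refine ⟨(n:ℝ) * C^2 / τ^l, fun ω => ?_⟩
    rw [hM, abs_div, abs_of_nonneg (pow_nonneg hτpos.le l),
      abs_of_nonneg (Finset.sum_nonneg fun i _ => sq_nonneg (proc k x0 A ω l i))]
    rw [div_le_div_iff_of_pos_right (pow_pos hτpos l)]
    calc ∑ i, (proc k x0 A ω l i)^2 ≤ ∑ _i : Fin n, C^2 :=
          Finset.sum_le_sum fun i _ => by
            have h2 := abs_le.mp (hC ω i)
            nlinarith [h2.1, h2.2]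
      _ = (n:ℝ) * C^2 := by simp [mul_comm]
  have hMint : ∀ l, Integrable (M l) μ := fun l => hIntOf _ (hMmeas l) (hMbdd l)
  have hXl : ∀ l, Measurable[ℱ l] (fun ω => proc k x0 A ω l) := by
    intro l
    refine measurable_iff_comap_le.mpr ?_
    rw [hℱ l]
    exact le_iSup₂ (f := fun m (_ : m ∈ Set.Iic l) =>
      MeasurableSpace.comap (fun ω => proc k x0 A ω m) inferInstance) l Set.self_mem_Iic
  have hadp : StronglyAdapted ℱ M := by
    intro l
    have : Measurable[ℱ l] (M l) := by
      rw [hMeq]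
      exact ((Finset.measurable_sum _ fun i _ =>
        ((measurable_pi_apply i).comp (hXl l)).pow_const 2).div_const _)
    exact this.stronglyMeasurable
  have hFle : ∀ l, (ℱ l : MeasurableSpace Ω)
      ≤ ⨆ j ∈ Set.Iio l, MeasurableSpace.comap (A j) inferInstance := by
    intro l
    rw [hℱ l]
    refine iSup₂_le fun m hm => ?_
    refine (measurable_iff_comap_le.mp (proc_measurable_iSup x0 A m)).trans ?_
    refine iSup₂_le fun j hj => ?_
    exact le_iSup₂ (f := fun j (_ : j ∈ Set.Iio l) =>
      MeasurableSpace.comap (A j) inferInstance) j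
      (Set.mem_Iio.mpr (lt_of_lt_of_le (Set.mem_Iio.mp hj) (Set.mem_Iic.mp hm)))
  have hindepF : ∀ l, Indep (MeasurableSpace.comap (A l) inferInstance) (ℱ l) μ := by
    intro l
    have h1 : Indep (⨆ j ∈ ({l} : Set ℕ), MeasurableSpace.comap (A j) inferInstance)
        (⨆ j ∈ Set.Iio l, MeasurableSpace.comap (A j) inferInstance) μ :=
      indep_iSup_of_disjoint (fun j => (hmeas j).comap_le) hindep
        (by simp [Set.disjoint_left])
    have h2 : (⨆ j ∈ ({l} : Set ℕ), MeasurableSpace.comap (A j) inferInstance)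
        = MeasurableSpace.comap (A l) inferInstance := by simp
    rw [h2] at h1
    exact indep_of_indep_of_le_right h1 (hFle l)
  have hcard_ae : ∀ᵐ ω ∂μ, ∀ m, (A m ω).card = k := by
    rw [ae_all_iff]
    intro m
    have hsub : {ω | ¬ (A m ω).card = k}
        ⊆ ⋃ s ∈ {s : Finset (Fin n) | s.card ≠ k}, A m ⁻¹' {s} := fun ω h =>
      Set.mem_biUnion h rfl
    refine measure_mono_null hsub ?_
    refine (measure_biUnion_null_iff (Set.to_countable _)).mpr fun s hs => ?_
    rw [hunif m s, if_neg hs]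
  have hCpos : (0:ℝ) < (n.choose k : ℝ) := by exact_mod_cast Nat.choose_pos hn.le
  have hstep : ∀ l, M l =ᵐ[μ] μ[M (l+1) | ℱ l] := by
    intro l
    set X : Ω → Fin n → ℝ := fun ω => proc k x0 A ω l with hXdef
    set g : Finset (Fin n) → Ω → ℝ :=
      fun s ω => (∑ i, (avgStep k s (X ω) i)^2) / τ^(l+1) with hgdef
    set I : Finset (Fin n) → Ω → ℝ :=
      fun s => (A l ⁻¹' {s}).indicator (fun _ => (1:ℝ)) with hIdef
    obtain ⟨C, hC0, hC⟩ := proc_bound x0 A hk1 l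
    have hgbd : ∀ s ω, |g s ω| ≤ (n:ℝ) * ((n:ℝ)*C+C)^2 / τ^(l+1) := by
      intro s ω
      rw [hgdef]
      simp only
      rw [abs_div, abs_of_nonneg (pow_nonneg hτpos.le _),
        abs_of_nonneg (Finset.sum_nonneg fun i _ => sq_nonneg _)]
      rw [div_le_div_iff_of_pos_right (pow_pos hτpos _)]
      calc ∑ i, (avgStep k s (X ω) i)^2 ≤ ∑ _i : Fin n, ((n:ℝ)*C+C)^2 := by
            refine Finset.sum_le_sum fun i _ => ?_
            have h2 := abs_le.mp (avgStep_bound hk1 s (X ω) C hC0 (fun j => hC ω j) i)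
            nlinarith [h2.1, h2.2]
        _ = (n:ℝ) * ((n:ℝ)*C+C)^2 := by simp [mul_comm]
    have hgmeasF : ∀ s, Measurable[ℱ l] (g s) := by
      intro s
      exact ((Finset.measurable_sum _ fun i _ => ((measurable_pi_apply i).comp
        ((avgStep_measurable s).comp (hXl l))).pow_const 2).div_const _)
    have hgmeas : ∀ s, Measurable (g s) := fun s => (hgmeasF s).mono (ℱ.le l) le_rfl
    have hImeas : ∀ s, Measurable (I s) :=
      fun s => measurable_const.indicator (hmeas l (by trivial))
    have hIbd : ∀ s ω, |I s ω| ≤ 1 := by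
      intro s ω
      rw [hIdef]; simp only [Set.indicator_apply]
      split_ifs <;> simp
    have hGIint : ∀ s, Integrable (fun ω => g s ω * I s ω) μ := by
      intro s
      refine hIntOf _ ((hgmeas s).mul (hImeas s))
        ⟨(n:ℝ) * ((n:ℝ)*C+C)^2 / τ^(l+1), fun ω => ?_⟩
      rw [abs_mul]
      calc |g s ω| * |I s ω| ≤ |g s ω| * 1 := by
            have := hIbd s ω; nlinarith [abs_nonneg (g s ω)]
        _ = |g s ω| := mul_one _
        _ ≤ _ := hgbd s ω
    have hIint : ∀ s, Integrable (I s) μ := fun s => hIntOf _ (hImeas s) ⟨1, hIbd s⟩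
    have hdec : M (l+1) = ∑ s : Finset (Fin n), (fun ω => g s ω * I s ω) := by
      funext ω
      rw [Finset.sum_apply]
      have hterm : ∀ s : Finset (Fin n), g s ω * I s ω
          = if A l ω = s then g s ω else 0 := by
        intro s
        rw [hIdef]
        simp only [Set.indicator_apply, Set.mem_preimage, Set.mem_singleton_iff]
        split_ifs <;> simp
      rw [Finset.sum_congr rfl fun s _ => hterm s, Finset.sum_ite_eq,
        if_pos (Finset.mem_univ _), hM]
      rfl
    have hIcond : ∀ s : Finset (Fin n),
        μ[I s | ℱ l] =ᵐ[μ] fun _ => (μ (A l ⁻¹' {s})).toReal := by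
      intro s
      have hsm : StronglyMeasurable[MeasurableSpace.comap (A l) inferInstance] (I s) :=
        stronglyMeasurable_const.indicator ⟨{s}, trivial, rfl⟩
      have h := condExp_indep_eq (hmeas l).comap_le (ℱ.le l) hsm (hindepF l)
      refine h.trans (Filter.EventuallyEq.of_eq ?_)
      funext ω
      exact integral_indicator_one (hmeas l (by trivial))
    have e2 : ∀ s : Finset (Fin n), μ[(fun ω => g s ω * I s ω) | ℱ l]
        =ᵐ[μ] fun ω => g s ω * (μ (A l ⁻¹' {s})).toReal := by
      intro s
      have h := condExp_mul_of_stronglyMeasurable_left ((hgmeasF s).stronglyMeasurable)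
        (hGIint s) (hIint s)
      refine h.trans ?_
      filter_upwards [hIcond s] with ω hω
      simp only [Pi.mul_apply]
      rw [hω]
    have e1 : μ[M (l+1) | ℱ l] =ᵐ[μ] fun ω => ∑ s : Finset (Fin n),
        g s ω * (μ (A l ⁻¹' {s})).toReal := by
      rw [hdec]
      refine (condExp_finset_sum (fun s _ => hGIint s) (ℱ l)).trans ?_
      set F : Finset (Fin n) → Ω → ℝ := fun s => μ[(fun ω' => g s ω' * I s ω')|ℱ l] with hF
      have hall : ∀ᵐ ω ∂μ, ∀ s : Finset (Fin n),
          F s ω = g s ω * (μ (A l ⁻¹' {s})).toReal := by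
        rw [ae_all_iff]; exact fun s => e2 s
      filter_upwards [hall] with ω hω
      rw [Finset.sum_apply]
      exact Finset.sum_congr rfl fun s _ => hω s
    have hfinal : (fun ω => ∑ s : Finset (Fin n), g s ω * (μ (A l ⁻¹' {s})).toReal)
        =ᵐ[μ] M l := by
      filter_upwards [hcard_ae] with ω hω
      have hsum0 : ∑ i, X ω i = 0 := proc_sum_zero x0 A hk1 hx0 ω hω l
      have hc : ∀ s : Finset (Fin n), (μ (A l ⁻¹' {s})).toReal
          = if s.card = k then ((n.choose k : ℝ))⁻¹ else 0 := by
        intro s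
        rw [hunif l s]
        split_ifs
        · rw [ENNReal.toReal_inv]; simp
        · simp
      calc ∑ s : Finset (Fin n), g s ω * (μ (A l ⁻¹' {s})).toReal
          = ∑ s : Finset (Fin n),
              (if s.card = k then g s ω * ((n.choose k : ℝ))⁻¹ else 0) := by
            refine Finset.sum_congr rfl fun s _ => ?_
            rw [hc s]; split_ifs <;> simp
        _ = ∑ s ∈ Finset.univ.filter (fun s : Finset (Fin n) => s.card = k),
              g s ω * ((n.choose k : ℝ))⁻¹ := (Finset.sum_filter _ _).symm
        _ = ∑ s ∈ Finset.powersetCard k (Finset.univ : Finset (Fin n)),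
              g s ω * ((n.choose k : ℝ))⁻¹ := by
            congr 1
            rw [Finset.powersetCard_eq_filter, Finset.powerset_univ]
        _ = (∑ s ∈ Finset.powersetCard k (Finset.univ : Finset (Fin n)),
              ∑ i, (avgStep k s (X ω) i)^2) / τ^(l+1) * ((n.choose k : ℝ))⁻¹ := by
            rw [← Finset.sum_mul, ← Finset.sum_div]
        _ = M l ω := by
            rw [avg_key hk hn (X ω) hsum0, hM l ω]
            rw [pow_succ]
            field_simp
            ring
    exact (e1.trans hfinal).symm
  have hmart : Martingale M ℱ μ := martingale_nat hadp hMint hstep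
  refine ⟨hmart, hMnonneg, ?_⟩
  have hint_eq : ∀ l, ∫ ω, M l ω ∂μ = ∫ ω, M 0 ω ∂μ := by
    intro l
    induction l with
    | zero => rfl
    | succ l ih =>
      have h : ∫ ω, M (l+1) ω ∂μ = ∫ ω, M l ω ∂μ := by
        rw [← integral_condExp (μ := μ) (f := M (l+1)) (ℱ.le l)]
        exact (integral_congr_ae (hstep l)).symm
      rw [h, ih]
  have hbdd : ∀ l, eLpNorm (M l) 1 μ ≤ (∫ ω, M 0 ω ∂μ).toNNReal := by
    intro l
    have h1 : eLpNorm (M l) 1 μ = ENNReal.ofReal (∫ ω, M l ω ∂μ) := by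
      rw [eLpNorm_one_eq_lintegral_enorm,
        ofReal_integral_eq_lintegral_ofReal (hMint l) (ae_of_all _ (hMnonneg l))]
      exact lintegral_congr fun ω => Real.enorm_eq_ofReal (hMnonneg l ω)
    rw [h1, hint_eq l]
    exact le_of_eq rfl
  exact hmart.submartingale.exists_ae_tendsto_of_bdd hbdd


end
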